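/- Let $S : [0, 2\pi] \to \mathbb{C}$ be a $C^2$ function satisfying $-iS''(\theta) + (S'(\theta))^2 = \lambda - a(\theta)$ on $[0, 2\pi]$, where $a : [0,2\pi] \to \mathbb{R}$ is continuous and $\lambda \in \mathbb{R}$, with boundary conditions $S'(0) = S'(2\pi)$ and $S(0) = 0$. Write $\eta = \mathrm{Re}\, S$, $\xi = \mathrm{Im}\, S$. Then $\eta'' = 2\eta'\xi'$ on $[0,2\pi]$, hence $\eta'(\theta) = \eta'(0)e^{2\xi(\theta) - 2\xi(0)}$; and if $\eta'(0) \neq 0$ then $\xi(2\pi) = \xi(0) = 0$, so that $S(2\pi) \in \mathbb{R}$. -/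

import Mathlib

open Real

theorem stmt_13 (S : ℝ → ℂ) (a : ℝ → ℝ) (lam : ℝ)
    (hS : ContDiff ℝ 2 S) (ha : Continuous a)
    (heq : ∀ θ ∈ Set.Icc (0:ℝ) (2*π),
      -Complex.I * deriv (deriv S) θ + (deriv S θ)^2 = ((lam - a θ : ℝ) : ℂ))
    (hbc : deriv S 0 = deriv S (2*π)) (h0 : S 0 = 0) :
    (∀ θ ∈ Set.Icc (0:ℝ) (2*π),
      deriv (deriv (fun t => (S t).re)) θ
        = 2 * deriv (fun t => (S t).re) θ * deriv (fun t => (S t).im) θ) ∧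
    (∀ θ ∈ Set.Icc (0:ℝ) (2*π),
      deriv (fun t => (S t).re) θ
        = deriv (fun t => (S t).re) 0 * Real.exp (2*(S θ).im - 2*(S 0).im)) ∧
    (deriv (fun t => (S t).re) 0 ≠ 0 →
      (S (2*π)).im = 0 ∧ (S 0).im = 0 ∧ (S (2*π)).im = 0) := by
  have hπ : (0:ℝ) ≤ 2*π := by positivity
  have hS1 : Differentiable ℝ S := hS.differentiable (by norm_num)
  have hS2 : Differentiable ℝ (deriv S) := by
    have := (contDiff_succ_iff_deriv.mp (show ContDiff ℝ (1+1) S by norm_num; exact hS)).2.2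
    exact this.differentiable (by norm_num)
  -- derivative facts
  have hre : ∀ t, HasDerivAt (fun t => (S t).re) ((deriv S t).re) t := fun t =>
    (Complex.reCLM.hasFDerivAt.comp_hasDerivAt t (hS1 t).hasDerivAt)
  have him : ∀ t, HasDerivAt (fun t => (S t).im) ((deriv S t).im) t := fun t =>
    (Complex.imCLM.hasFDerivAt.comp_hasDerivAt t (hS1 t).hasDerivAt)
  have hre2 : ∀ t, HasDerivAt (fun t => (deriv S t).re) ((deriv (deriv S) t).re) t := fun t =>
    (Complex.reCLM.hasFDerivAt.comp_hasDerivAt t (hS2 t).hasDerivAt)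
  have hderre : deriv (fun t => (S t).re) = fun t => (deriv S t).re := funext fun t => (hre t).deriv
  have hderim : deriv (fun t => (S t).im) = fun t => (deriv S t).im := funext fun t => (him t).deriv
  -- imaginary part of the equation
  have key : ∀ θ ∈ Set.Icc (0:ℝ) (2*π),
      (deriv (deriv S) θ).re = 2 * (deriv S θ).re * (deriv S θ).im := by
    intro θ hθ
    have := congrArg Complex.im (heq θ hθ)
    simp [Complex.add_im, Complex.mul_im, Complex.ofReal_im, sq] at this
    linarith
  have part1 : ∀ θ ∈ Set.Icc (0:ℝ) (2*π),
      deriv (deriv (fun t => (S t).re)) θ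
        = 2 * deriv (fun t => (S t).re) θ * deriv (fun t => (S t).im) θ := by
    intro θ hθ
    rw [hderre, hderim, (hre2 θ).deriv]
    exact key θ hθ
  -- the function g
  set g : ℝ → ℝ := fun t => (deriv S t).re * Real.exp (-(2 * (S t).im)) with hg_def
  have hg : ∀ t ∈ Set.Icc (0:ℝ) (2*π), HasDerivAt g 0 t := by
    intro t ht
    have hexp : HasDerivAt (fun t => Real.exp (-(2 * (S t).im)))
        (Real.exp (-(2 * (S t).im)) * (-(2 * (deriv S t).im))) t :=
      (((him t).const_mul 2).neg).exp
    have := (hre2 t).mul hexp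
    have h0' : (deriv (deriv S) t).re * Real.exp (-(2 * (S t).im)) + (deriv S t).re * (Real.exp (-(2 * (S t).im)) * -(2 * (deriv S t).im)) = 0 := by
      rw [key t ht]; ring
    rw [h0'] at this
    exact this
  have hconst : ∀ x ∈ Set.Icc (0:ℝ) (2*π), g x = g 0 := by
    apply constant_of_derivWithin_zero
    · exact fun t ht => ((hg t ht).differentiableAt).differentiableWithinAt
    · intro t ht
      have ht' := Set.Ico_subset_Icc_self ht
      rw [(hg t ht').differentiableAt.derivWithin (uniqueDiffOn_Icc (by positivity) t ht')]
      exact (hg t ht').deriv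
  have part2 : ∀ θ ∈ Set.Icc (0:ℝ) (2*π),
      deriv (fun t => (S t).re) θ
        = deriv (fun t => (S t).re) 0 * Real.exp (2*(S θ).im - 2*(S 0).im) := by
    intro θ hθ
    have h := hconst θ hθ
    simp only [hg_def] at h
    rw [hderre]
    have hid : (deriv S θ).re
        = (deriv S θ).re * Real.exp (-(2*(S θ).im)) * Real.exp (2*(S θ).im) := by
      rw [mul_assoc, ← Real.exp_add]; simp
    beta_reduce
    rw [hid, h, mul_assoc, ← Real.exp_add]
    ring_nf
  refine ⟨part1, part2, fun hne => ?_⟩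
  have hξ0 : (S 0).im = 0 := by rw [h0]; simp
  have h2π : (2*π) ∈ Set.Icc (0:ℝ) (2*π) := Set.right_mem_Icc.mpr hπ
  have h := part2 (2*π) h2π
  rw [hderre] at h hne
  beta_reduce at h hne
  rw [← hbc, hξ0] at h
  have h' : (deriv S 0).re * 1 = (deriv S 0).re * Real.exp (2*(S (2*π)).im - 2*0) := by
    rw [mul_one]; exact h
  have hexp1 : Real.exp (2*(S (2*π)).im - 2*0) = 1 := (mul_left_cancel₀ hne h').symm
  have hz : 2*(S (2*π)).im - 2*0 = 0 := Real.exp_injective (by rw [Real.exp_zero]; exact hexp1)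
  exact ⟨by linarith, hξ0, by linarith⟩
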